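/- arXiv:math/0503280 — 2 statements merged into one kernel-verified Lean document; each statement's English description precedes it below -/
import Mathlib

section
/- In any group, if elements a, b, c satisfy a⁻¹ba = b², c⁻¹ac = a², and b⁻¹cb = c², then c² = a⁻²b⁻². -/
section GroupAux

variable {G : Type*} [Group G] {x y : G}

lemma aux_swap (h : x⁻¹ * y * x = y ^ 2) : ∀ n : ℕ, y ^ n * x = x * y ^ (2 * n) := by
  have hy : y * x = x * y ^ 2 := by rw [← h]; group
  intro n
  induction n with
  | zero => simp
  | succ n ih =>
    calc y ^ (n + 1) * x = y ^ n * (y * x) := by rw [pow_succ]; group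
    _ = y ^ n * x * y ^ 2 := by rw [hy]; group
    _ = x * y ^ (2 * n) * y ^ 2 := by rw [ih]
    _ = x * y ^ (2 * (n + 1)) := by rw [mul_assoc, ← pow_add]; ring_nf

lemma aux_swap_pow (h : x⁻¹ * y * x = y ^ 2) :
    ∀ (n k : ℕ), y ^ k * x ^ n = x ^ n * y ^ (2 ^ n * k) := by
  intro n
  induction n with
  | zero => simp
  | succ n ih =>
    intro k
    calc y ^ k * x ^ (n + 1) = (y ^ k * x ^ n) * x := by rw [pow_succ]; group
    _ = x ^ n * (y ^ (2 ^ n * k) * x) := by rw [ih]; group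
    _ = x ^ n * (x * y ^ (2 * (2 ^ n * k))) := by rw [aux_swap h]
    _ = x ^ (n + 1) * y ^ (2 ^ (n + 1) * k) := by
        rw [pow_succ, pow_succ]
        ring_nf
        group

lemma aux_mul_pow (h : x⁻¹ * y * x = y ^ 2) :
    ∀ (k n : ℕ), (x * y ^ k) ^ n * y ^ k = x ^ n * y ^ (2 ^ n * k) := by
  intro k n
  induction n with
  | zero => simp
  | succ n ih =>
    calc (x * y ^ k) ^ (n + 1) * y ^ k = (x * y ^ k) * ((x * y ^ k) ^ n * y ^ k) := by
          rw [pow_succ']; group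
    _ = (x * y ^ k) * (x ^ n * y ^ (2 ^ n * k)) := by rw [ih]
    _ = x * (y ^ k * x ^ n) * y ^ (2 ^ n * k) := by group
    _ = x * (x ^ n * y ^ (2 ^ n * k)) * y ^ (2 ^ n * k) := by rw [aux_swap_pow h]
    _ = x ^ (n + 1) * y ^ (2 ^ (n + 1) * k) := by
        rw [pow_succ', pow_succ]
        rw [mul_assoc, mul_assoc, ← pow_add]
        ring_nf
        rw [mul_assoc]
        group

lemma aux_conj_pow (h : x⁻¹ * y * x = y ^ 2) :
    ∀ n : ℕ, (x ^ n)⁻¹ * y * x ^ n = y ^ (2 ^ n) := by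
  intro n
  induction n with
  | zero => simp
  | succ n ih =>
    calc (x ^ (n + 1))⁻¹ * y * x ^ (n + 1)
        = x⁻¹ * ((x ^ n)⁻¹ * y * x ^ n) * x := by rw [pow_succ]; group
    _ = x⁻¹ * y ^ (2 ^ n) * x := by rw [ih]
    _ = (x⁻¹ * y * x) ^ (2 ^ n) := by
        have := conj_pow (i := 2 ^ n) (a := x⁻¹) (b := y)
        simpa using this.symm
    _ = y ^ (2 ^ (n + 1)) := by rw [h, ← pow_mul, pow_succ, Nat.mul_comm]

end GroupAux

section NT

lemma step_prime {p y : ℕ} (hp : p.Prime) (hy : 0 < y) (hpd : p ∣ 2 ^ y - 1) :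
    ∃ q, q.Prime ∧ q ∣ y ∧ q < p := by
  have h1le : 1 ≤ 2 ^ y := Nat.one_le_two_pow
  have hp2 : p ≠ 2 := by
    rintro rfl
    have hodd : Odd (2 ^ y - 1) := by
      have : Even (2 ^ y) := (Nat.even_pow).mpr ⟨even_two, hy.ne'⟩
      exact Nat.Even.sub_odd h1le this odd_one
    rw [Nat.odd_iff] at hodd
    omega
  haveI : Fact p.Prime := ⟨hp⟩
  have h2 : (2 : ZMod p) ^ y = 1 := by
    have h0 : ((2 ^ y - 1 : ℕ) : ZMod p) = 0 := (ZMod.natCast_eq_zero_iff _ _).mpr hpd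
    have h0' : ((2 ^ y : ℕ) : ZMod p) - ((1 : ℕ) : ZMod p) = 0 := by
      rw [← Nat.cast_sub h1le]; exact h0
    push_cast at h0'
    have := sub_eq_zero.mp h0'
    simpa using this
  have hone : (1 : ZMod p) ≠ 0 := one_ne_zero
  have h2ne1 : (2 : ZMod p) ≠ 1 := by
    intro hc
    have : ((2 : ℕ) : ZMod p) = ((1 : ℕ) : ZMod p) := by push_cast; exact hc
    rw [ZMod.natCast_eq_natCast_iff] at this
    have := (Nat.modEq_iff_dvd' (by norm_num)).mp this.symm
    have hple : p ≤ 1 := Nat.le_of_dvd one_pos this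
    have := hp.two_le
    omega
  have h2ne0 : (2 : ZMod p) ≠ 0 := by
    intro hc
    have : ((2 : ℕ) : ZMod p) = 0 := by push_cast; exact hc
    rw [ZMod.natCast_eq_zero_iff] at this
    have := (Nat.prime_dvd_prime_iff_eq hp Nat.prime_two).mp this
    exact hp2 this
  set r := orderOf (2 : ZMod p) with hr
  have hr_dvd_y : r ∣ y := orderOf_dvd_of_pow_eq_one h2
  have hr_dvd_p : r ∣ p - 1 := ZMod.orderOf_dvd_card_sub_one h2ne0
  have hrpos : 0 < r := by
    rw [hr, orderOf_pos_iff, isOfFinOrder_iff_pow_eq_one]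
    exact ⟨y, hy, h2⟩
  have hrne1 : r ≠ 1 := by
    intro hc
    exact h2ne1 (orderOf_eq_one_iff.mp hc)
  have hrle : r ≤ p - 1 := Nat.le_of_dvd (by have := hp.two_le; omega) hr_dvd_p
  refine ⟨r.minFac, Nat.minFac_prime hrne1, (Nat.minFac_dvd r).trans hr_dvd_y, ?_⟩
  have hmle : r.minFac ≤ r := Nat.minFac_le hrpos
  omega

lemma nt_cycle {d e m : ℕ} (hd : 0 < d) (he : 0 < e) (hm : 0 < m)
    (hde : d ∣ 2 ^ e - 1) (hem : e ∣ 2 ^ m - 1) (hmd : m ∣ 2 ^ d - 1) :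
    d = 1 ∧ e = 1 ∧ m = 1 := by
  by_contra hcon
  have hprod : 1 < d * e * m := by
    rcases Nat.lt_or_ge (d * e * m) 2 with h | h
    · have h1 : d * e * m = 1 := by
        have := Nat.one_le_iff_ne_zero.mpr (by positivity : d * e * m ≠ 0)
        omega
      have h3 : m = 1 := Nat.eq_one_of_mul_eq_one_left h1
      have h2 : d * e = 1 := by
        have := Nat.eq_one_of_mul_eq_one_right h1
        nlinarith
      exact absurd ⟨Nat.eq_one_of_mul_eq_one_right h2, Nat.eq_one_of_mul_eq_one_left h2, h3⟩ hcon
    · omega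
  set p := (d * e * m).minFac with hp'
  have hp : p.Prime := Nat.minFac_prime (by omega)
  have hpd : p ∣ d * e * m := Nat.minFac_dvd _
  have hkey : ∃ q, q.Prime ∧ q ∣ d * e * m ∧ q < p := by
    rcases (Nat.Prime.dvd_mul hp).mp hpd with h' | hpm
    · rcases (Nat.Prime.dvd_mul hp).mp h' with hpd2 | hpe
      · obtain ⟨q, hq, hqe, hqp⟩ := step_prime hp he (hpd2.trans hde)
        exact ⟨q, hq, Dvd.dvd.mul_right (Dvd.dvd.mul_left hqe d) m, hqp⟩
      · obtain ⟨q, hq, hqm, hqp⟩ := step_prime hp hm (hpe.trans hem)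
        exact ⟨q, hq, Dvd.dvd.mul_left hqm (d * e), hqp⟩
    · obtain ⟨q, hq, hqd, hqp⟩ := step_prime hp hd (hpm.trans hmd)
      exact ⟨q, hq, Dvd.dvd.mul_right (Dvd.dvd.mul_right hqd e) m, hqp⟩
  obtain ⟨q, hq, hqdem, hqp⟩ := hkey
  have : p ≤ q := Nat.minFac_le_of_dvd hq.two_le hqdem
  omega

end NT

theorem c_sq_eq {G : Type*} [Group G] (a b c : G)
    (h1 : a⁻¹ * b * a = b ^ 2) (h2 : c⁻¹ * a * c = a ^ 2) (h3 : b⁻¹ * c * b = c ^ 2) :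
    c ^ 2 = (a ^ 2)⁻¹ * (b ^ 2)⁻¹ := by
  -- basic commutation facts
  have hba : b * a = a * b ^ 2 := by
    have := aux_swap h1 1
    simpa using this
  have hab : b * a * b⁻¹ = a * b := by rw [hba]; group
  -- c⁻¹ (ab) c = (ab)^4
  have e3norm : (c ^ 2)⁻¹ * a * c ^ 2 = a ^ 4 := by
    have h := aux_conj_pow h2 2
    norm_num at h
    exact h
  have e3' : (b⁻¹ * c * b)⁻¹ * a * (b⁻¹ * c * b) = a ^ 4 := by rw [h3]; exact e3norm
  have e5 : c⁻¹ * (a * b) * c = (a * b) ^ 4 := by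
    calc c⁻¹ * (a * b) * c = c⁻¹ * (b * a * b⁻¹) * c := by rw [hab]
    _ = b * ((b⁻¹ * c * b)⁻¹ * a * (b⁻¹ * c * b)) * b⁻¹ := by group
    _ = b * a ^ 4 * b⁻¹ := by rw [e3']
    _ = (b * a * b⁻¹) ^ 4 := by rw [conj_pow]
    _ = (a * b) ^ 4 := by rw [hab]
  -- (ab)^4 = a^4 b^15
  have hab4 : (a * b) ^ 4 = a ^ 4 * b ^ 15 := by
    have h := aux_mul_pow h1 1 4
    norm_num at h
    calc (a * b) ^ 4 = ((a * b) ^ 4 * b) * b⁻¹ := by group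
    _ = a ^ 4 * b ^ 16 * b⁻¹ := by rw [h]
    _ = a ^ 4 * b ^ 15 := by group
  -- c⁻¹ b c = a² b¹⁵
  have hbc : c⁻¹ * b * c = a ^ 2 * b ^ 15 := by
    have heq : a ^ 2 * (c⁻¹ * b * c) = a ^ 4 * b ^ 15 := by
      calc a ^ 2 * (c⁻¹ * b * c) = (c⁻¹ * a * c) * (c⁻¹ * b * c) := by rw [h2]
      _ = c⁻¹ * (a * b) * c := by group
      _ = (a * b) ^ 4 := e5
      _ = a ^ 4 * b ^ 15 := hab4
    calc c⁻¹ * b * c = (a ^ 2)⁻¹ * (a ^ 2 * (c⁻¹ * b * c)) := by group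
    _ = (a ^ 2)⁻¹ * (a ^ 4 * b ^ 15) := by rw [heq]
    _ = a ^ 2 * b ^ 15 := by group
  -- c⁻¹ (ab²) c = (ab²)^16
  have f2 : c⁻¹ * (a * b) ^ 4 * c = (a * b) ^ 16 := by
    have h : (c⁻¹ * (a * b) * c) ^ 4 = c⁻¹ * (a * b) ^ 4 * c := by
      have hc := conj_pow (i := 4) (a := c⁻¹) (b := a * b)
      rwa [inv_inv] at hc
    rw [e5] at h
    rw [← h, ← pow_mul]
  have f3 : (c ^ 2)⁻¹ * (a * b) * c ^ 2 = (a * b) ^ 16 := by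
    calc (c ^ 2)⁻¹ * (a * b) * c ^ 2 = c⁻¹ * (c⁻¹ * (a * b) * c) * c := by
          rw [pow_two, mul_inv_rev]; group
    _ = c⁻¹ * (a * b) ^ 4 * c := by rw [e5]
    _ = (a * b) ^ 16 := f2
  have f4 : (b⁻¹ * c * b)⁻¹ * (a * b) * (b⁻¹ * c * b) = (a * b) ^ 16 := by rw [h3]; exact f3
  have hbab : b * (a * b) * b⁻¹ = a * b ^ 2 := by
    rw [show b * (a * b) * b⁻¹ = b * a from by group, hba]
  have hS4 : c⁻¹ * (a * b ^ 2) * c = (a * b ^ 2) ^ 16 := by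
    calc c⁻¹ * (a * b ^ 2) * c = c⁻¹ * (b * (a * b) * b⁻¹) * c := by rw [hbab]
    _ = b * ((b⁻¹ * c * b)⁻¹ * (a * b) * (b⁻¹ * c * b)) * b⁻¹ := by group
    _ = b * (a * b) ^ 16 * b⁻¹ := by rw [f4]
    _ = (b * (a * b) * b⁻¹) ^ 16 := by rw [conj_pow]
    _ = (a * b ^ 2) ^ 16 := by rw [hbab]
  -- the other expansion
  have hS5 : c⁻¹ * (a * b ^ 2) * c = a ^ 6 * b ^ 75 := by
    have hsw : b ^ 15 * a ^ 2 = a ^ 2 * b ^ 60 := by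
      have h := aux_swap_pow h1 2 15
      norm_num at h
      exact h
    calc c⁻¹ * (a * b ^ 2) * c
        = (c⁻¹ * a * c) * (c⁻¹ * b * c) * (c⁻¹ * b * c) := by
          rw [pow_two]; group
    _ = a ^ 2 * (a ^ 2 * b ^ 15) * (a ^ 2 * b ^ 15) := by rw [h2, hbc]
    _ = a ^ 2 * a ^ 2 * (b ^ 15 * a ^ 2) * b ^ 15 := by group
    _ = a ^ 2 * a ^ 2 * (a ^ 2 * b ^ 60) * b ^ 15 := by rw [hsw]
    _ = a ^ 6 * b ^ 75 := by group
  have hS6 : (a * b ^ 2) ^ 16 = a ^ 16 * b ^ 131070 := by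
    have h := aux_mul_pow h1 2 16
    norm_num at h
    calc (a * b ^ 2) ^ 16 = ((a * b ^ 2) ^ 16 * b ^ 2) * (b ^ 2)⁻¹ := by group
    _ = a ^ 16 * b ^ 131072 * (b ^ 2)⁻¹ := by rw [h]
    _ = a ^ 16 * b ^ 131070 := by group
  have heq2 : a ^ 6 * b ^ 75 = a ^ 16 * b ^ 131070 := hS5.symm.trans (hS4.trans hS6)
  have hkey : a ^ 10 * b ^ 130995 = 1 := by
    have h : a ^ 10 * b ^ 130995 = (a ^ 6)⁻¹ * (a ^ 16 * b ^ 131070) * (b ^ 75)⁻¹ := by group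
    rw [h, ← heq2]; group
  have ha10 : a ^ 10 = (b ^ 130995)⁻¹ := eq_inv_of_mul_eq_one_left hkey
  have hcomm : b * a ^ 10 = a ^ 10 * b := by rw [ha10]; group
  have h10 : b * a ^ 10 = a ^ 10 * b ^ 1024 := by
    have h := aux_swap_pow h1 10 1
    norm_num at h
    exact h
  have hb1024 : b ^ 1024 = b := mul_left_cancel (h10.symm.trans hcomm)
  have hb1023 : b ^ 1023 = 1 := by
    have : b ^ 1023 * b = 1 * b := by
      rw [one_mul, ← pow_succ]
      norm_num
      exact hb1024
    exact mul_right_cancel this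
  -- orders
  have hmpos : 0 < orderOf b :=
    orderOf_pos_iff.mpr (isOfFinOrder_iff_pow_eq_one.mpr ⟨1023, by norm_num, hb1023⟩)
  have hbm : b ^ orderOf b = 1 := pow_orderOf_eq_one b
  have hcm : c ^ (2 ^ orderOf b - 1) = 1 := by
    have h := aux_conj_pow h3 (orderOf b)
    rw [hbm] at h
    simp only [inv_one, one_mul, mul_one] at h
    have h1le : 1 ≤ 2 ^ orderOf b := Nat.one_le_two_pow
    have hstep : c ^ (2 ^ orderOf b - 1) * c = 1 * c := by
      rw [one_mul, ← pow_succ, Nat.sub_add_cancel h1le]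
      exact h.symm
    exact mul_right_cancel hstep
  have hepos : 0 < orderOf c := by
    refine orderOf_pos_iff.mpr (isOfFinOrder_iff_pow_eq_one.mpr ⟨2 ^ orderOf b - 1, ?_, hcm⟩)
    have : 2 ^ 1 ≤ 2 ^ orderOf b := Nat.pow_le_pow_right (by norm_num) hmpos
    omega
  have hcn : c ^ orderOf c = 1 := pow_orderOf_eq_one c
  have ham : a ^ (2 ^ orderOf c - 1) = 1 := by
    have h := aux_conj_pow h2 (orderOf c)
    rw [hcn] at h
    simp only [inv_one, one_mul, mul_one] at h
    have h1le : 1 ≤ 2 ^ orderOf c := Nat.one_le_two_pow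
    have hstep : a ^ (2 ^ orderOf c - 1) * a = 1 * a := by
      rw [one_mul, ← pow_succ, Nat.sub_add_cancel h1le]
      exact h.symm
    exact mul_right_cancel hstep
  have hdpos : 0 < orderOf a := by
    refine orderOf_pos_iff.mpr (isOfFinOrder_iff_pow_eq_one.mpr ⟨2 ^ orderOf c - 1, ?_, ham⟩)
    have : 2 ^ 1 ≤ 2 ^ orderOf c := Nat.pow_le_pow_right (by norm_num) hepos
    omega
  have han : a ^ orderOf a = 1 := pow_orderOf_eq_one a
  have hbm2 : b ^ (2 ^ orderOf a - 1) = 1 := by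
    have h := aux_conj_pow h1 (orderOf a)
    rw [han] at h
    simp only [inv_one, one_mul, mul_one] at h
    have h1le : 1 ≤ 2 ^ orderOf a := Nat.one_le_two_pow
    have hstep : b ^ (2 ^ orderOf a - 1) * b = 1 * b := by
      rw [one_mul, ← pow_succ, Nat.sub_add_cancel h1le]
      exact h.symm
    exact mul_right_cancel hstep
  have hdvd_de : orderOf a ∣ 2 ^ orderOf c - 1 := orderOf_dvd_of_pow_eq_one ham
  have hdvd_em : orderOf c ∣ 2 ^ orderOf b - 1 := orderOf_dvd_of_pow_eq_one hcm
  have hdvd_md : orderOf b ∣ 2 ^ orderOf a - 1 := orderOf_dvd_of_pow_eq_one hbm2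
  obtain ⟨hd1, he1, hm1⟩ := nt_cycle hdpos hepos hmpos hdvd_de hdvd_em hdvd_md
  have ha1 : a = 1 := orderOf_eq_one_iff.mp hd1
  have hc1 : c = 1 := orderOf_eq_one_iff.mp he1
  have hb1 : b = 1 := orderOf_eq_one_iff.mp hm1
  rw [ha1, hb1, hc1]
  group
end

section
/- In the symmetric group S₇, the subgroup generated by the image of S₅ (permuting {1,2,3,6,7}) and the image of S₃ × S₂ (where S₃ permutes {1,2,3} and the nontrivial element of S₂ maps to (4 6)(5 7)) is all of S₇. -/
/-- The copy of S₅ in S₇ fixing 4 and 5 (0-indexed: fixing 3 and 4), together with the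
copy of S₃ × S₂ (S₃ on {1,2,3}, i.e. {0,1,2}; the S₂ generator acting as
(4 6)(5 7), i.e. (3 5)(4 6)), generates all of S₇. -/
theorem brown_vertex_S7 :
    Subgroup.closure
      ({σ : Equiv.Perm (Fin 7) | σ 3 = 3 ∧ σ 4 = 4} ∪
       {τ : Equiv.Perm (Fin 7) | ∃ σ : Equiv.Perm (Fin 7),
          (∀ i : Fin 7, 3 ≤ (i : ℕ) → σ i = i) ∧
          (τ = σ ∨ τ = σ * (Equiv.swap 3 5 * Equiv.swap 4 6))}) = ⊤ := by
  set S := ({σ : Equiv.Perm (Fin 7) | σ 3 = 3 ∧ σ 4 = 4} ∪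
       {τ : Equiv.Perm (Fin 7) | ∃ σ : Equiv.Perm (Fin 7),
          (∀ i : Fin 7, 3 ≤ (i : ℕ) → σ i = i) ∧
          (τ = σ ∨ τ = σ * (Equiv.swap 3 5 * Equiv.swap 4 6))}) with hS
  set K := Subgroup.closure S with hK
  -- elements fixing 3 and 4 are in K
  have hH : ∀ σ : Equiv.Perm (Fin 7), σ 3 = 3 → σ 4 = 4 → σ ∈ K := by
    intro σ h3 h4
    exact Subgroup.subset_closure (Or.inl ⟨h3, h4⟩)
  -- t = (3 5)(4 6) is in K
  have ht : (Equiv.swap (3 : Fin 7) 5 * Equiv.swap 4 6) ∈ K := by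
    apply Subgroup.subset_closure
    exact Or.inr ⟨1, fun i _ => rfl, Or.inr (one_mul _).symm⟩
  set t := (Equiv.swap (3 : Fin 7) 5 * Equiv.swap 4 6) with htdef
  -- swaps avoiding 3 and 4
  have s01 : Equiv.swap (0 : Fin 7) 1 ∈ K := hH _ (by decide) (by decide)
  have s12 : Equiv.swap (1 : Fin 7) 2 ∈ K := hH _ (by decide) (by decide)
  have s56 : Equiv.swap (5 : Fin 7) 6 ∈ K := hH _ (by decide) (by decide)
  have s25 : Equiv.swap (2 : Fin 7) 5 ∈ K := hH _ (by decide) (by decide)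
  -- swap 3 4 = t * swap 5 6 * t⁻¹
  have s34 : Equiv.swap (3 : Fin 7) 4 ∈ K := by
    have h : Equiv.swap (3 : Fin 7) 4 = t * Equiv.swap 5 6 * t⁻¹ := by decide
    rw [h]; exact K.mul_mem (K.mul_mem ht s56) (K.inv_mem ht)
  -- swap 2 3 = t * swap 2 5 * t⁻¹
  have s23 : Equiv.swap (2 : Fin 7) 3 ∈ K := by
    have h : Equiv.swap (2 : Fin 7) 3 = t * Equiv.swap 2 5 * t⁻¹ := by decide
    rw [h]; exact K.mul_mem (K.mul_mem ht s25) (K.inv_mem ht)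
  -- swap 2 4 = swap 2 3 * swap 3 4 * (swap 2 3)⁻¹
  have s24 : Equiv.swap (2 : Fin 7) 4 ∈ K := by
    have h : Equiv.swap (2 : Fin 7) 4 =
        Equiv.swap 2 3 * Equiv.swap 3 4 * (Equiv.swap 2 3)⁻¹ := by decide
    rw [h]; exact K.mul_mem (K.mul_mem s23 s34) (K.inv_mem s23)
  -- swap 4 5 = swap 2 5 * swap 2 4 * (swap 2 5)⁻¹
  have s45 : Equiv.swap (4 : Fin 7) 5 ∈ K := by
    have h : Equiv.swap (4 : Fin 7) 5 =
        Equiv.swap 2 5 * Equiv.swap 2 4 * (Equiv.swap 2 5)⁻¹ := by decide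
    rw [h]; exact K.mul_mem (K.mul_mem s25 s24) (K.inv_mem s25)
  -- the 7-cycle
  have hc : (finRotate 7) ∈ K := by
    have h : (finRotate 7) = Equiv.swap (0 : Fin 7) 1 * Equiv.swap 1 2 *
        Equiv.swap 2 3 * Equiv.swap 3 4 * Equiv.swap 4 5 * Equiv.swap 5 6 := by decide
    rw [h]
    exact K.mul_mem (K.mul_mem (K.mul_mem (K.mul_mem (K.mul_mem s01 s12) s23) s34) s45) s56
  have htop := Equiv.Perm.closure_cycle_adjacent_swap (σ := finRotate 7)
    (isCycle_finRotate) (support_finRotate) (0 : Fin 7)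
  rw [eq_top_iff, ← htop]
  apply Subgroup.closure_le K |>.mpr
  intro x hx
  rcases hx with h | h
  · rw [h]; exact hc
  · simp only [Set.mem_singleton_iff] at h
    rw [h]
    have : (finRotate 7) (0 : Fin 7) = 1 := by decide
    rw [this]; exact s01
end
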